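/- arXiv:2409.18510 — 3 statements merged into one kernel-verified Lean document; each statement's English description precedes it below -/
import Mathlib

section
/- Let f be a 2-rainbow dominating function of C_m □ C_n of minimum weight (a γ_{r2}(C_m □ C_n)-function), and write m = 3k + ℓ with ℓ ≡ m (mod 3), ℓ ∈ {0,1,2}. For each column index i, let s_i = Σ_{x ∈ C^i} |f(x)| be the weight of f on the i-th column. Then for every i (indices taken modulo n), s_{i-1} + s_{i+1} ≥ 2m − 4·s_i = 6k + 2ℓ − 4·s_i. -/
open SimpleGraph Finset

/-- `f` is a `k`-rainbow dominating function of `G`: every vertex with empty label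
sees all `k` colors in its open neighborhood. -/
def IsRainbowDominating {V : Type*} (G : SimpleGraph V) (k : ℕ)
    (f : V → Finset (Fin k)) : Prop :=
  ∀ v, f v = ∅ → ∀ c : Fin k, ∃ u, G.Adj v u ∧ c ∈ f u

/-- The `k`-rainbow domination number: the minimum weight of a `k`-rainbow
dominating function. -/
noncomputable def rainbowDomNum {V : Type*} [Fintype V] (G : SimpleGraph V) (k : ℕ) : ℕ :=
  sInf {w | ∃ f : V → Finset (Fin k), IsRainbowDominating G k f ∧ w = ∑ v, (f v).card}

lemma cycle_adj_cases {m : ℕ} [NeZero m] (hm : 3 ≤ m) {a b : Fin m}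
    (h : (cycleGraph m).Adj a b) : b = a - 1 ∨ b = a + 1 := by
  rw [cycleGraph_adj'] at h
  have h1 : (1 : Fin m).val = 1 := by
    rw [Fin.val_one', Nat.mod_eq_of_lt (by omega)]
  rcases h with h | h
  · left
    have hab : a - b = 1 := Fin.ext (by rw [h1]; exact h)
    rw [← hab]; abel
  · right
    have hab : b - a = 1 := Fin.ext (by rw [h1]; exact h)
    rw [← hab]; abel

theorem column_weight_ineq (m n k ℓ : ℕ) [NeZero n] (hm : 3 ≤ m) (hn : 3 ≤ n)
    (hkl : m = 3 * k + ℓ) (hℓ : ℓ < 3)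
    (f : Fin m × Fin n → Finset (Fin 2))
    (hf : IsRainbowDominating (cycleGraph m □ cycleGraph n) 2 f)
    (hmin : ∑ v, (f v).card = rainbowDomNum (cycleGraph m □ cycleGraph n) 2)
    (s : Fin n → ℕ) (hs : ∀ j, s j = ∑ i : Fin m, (f (i, j)).card) (j : Fin n) :
    (s (j - 1) : ℤ) + s (j + 1) ≥ 2 * m - 4 * s j ∧
      (2 * (m : ℤ) - 4 * s j = 6 * k + 2 * ℓ - 4 * s j) := by
  haveI : NeZero m := ⟨by omega⟩
  constructor
  · -- key pointwise inequality
    have key : ∀ i : Fin m, 2 ≤ 2 * (f (i, j)).card + (f (i - 1, j)).card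
        + (f (i + 1, j)).card + (f (i, j - 1)).card + (f (i, j + 1)).card := by
      intro i
      by_cases hemp : f (i, j) = ∅
      · set S : Finset (Fin 2) :=
          f (i - 1, j) ∪ f (i + 1, j) ∪ f (i, j - 1) ∪ f (i, j + 1) with hS
        have mem_of : ∀ u : Fin m × Fin n,
            (cycleGraph m □ cycleGraph n).Adj (i, j) u → f u ⊆ S := by
          intro u hadj
          rw [boxProd_adj] at hadj
          rcases hadj with ⟨h1, h2⟩ | ⟨h1, h2⟩
          · rcases cycle_adj_cases hm h1 with h | h
            · have : u = (i - 1, j) := Prod.ext h h2.symm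
              rw [this, hS]
              intro x hx
              exact mem_union_left _ (mem_union_left _ (mem_union_left _ hx))
            · have : u = (i + 1, j) := Prod.ext h h2.symm
              rw [this, hS]
              intro x hx
              exact mem_union_left _ (mem_union_left _ (mem_union_right _ hx))
          · rcases cycle_adj_cases hn h1 with h | h
            · have : u = (i, j - 1) := Prod.ext h2.symm h
              rw [this, hS]
              intro x hx
              exact mem_union_left _ (mem_union_right _ hx)
            · have : u = (i, j + 1) := Prod.ext h2.symm h
              rw [this, hS]
              intro x hx
              exact mem_union_right _ hx
        obtain ⟨u0, hu0, hc0⟩ := hf (i, j) hemp 0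
        obtain ⟨u1, hu1, hc1⟩ := hf (i, j) hemp 1
        have h0S : (0 : Fin 2) ∈ S := mem_of u0 hu0 hc0
        have h1S : (1 : Fin 2) ∈ S := mem_of u1 hu1 hc1
        have hcard : 2 ≤ S.card :=
          Finset.one_lt_card.mpr ⟨0, h0S, 1, h1S, by decide⟩
        have hle : S.card ≤ (f (i - 1, j)).card + (f (i + 1, j)).card
            + (f (i, j - 1)).card + (f (i, j + 1)).card := by
          calc S.card ≤ (f (i - 1, j) ∪ f (i + 1, j) ∪ f (i, j - 1)).card
                + (f (i, j + 1)).card := Finset.card_union_le _ _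
            _ ≤ (f (i - 1, j) ∪ f (i + 1, j)).card + (f (i, j - 1)).card
                + (f (i, j + 1)).card := by
                have := Finset.card_union_le (f (i - 1, j) ∪ f (i + 1, j)) (f (i, j - 1))
                omega
            _ ≤ (f (i - 1, j)).card + (f (i + 1, j)).card + (f (i, j - 1)).card
                + (f (i, j + 1)).card := by
                have := Finset.card_union_le (f (i - 1, j)) (f (i + 1, j))
                omega
        omega
      · have : 1 ≤ (f (i, j)).card := Finset.card_pos.mpr (Finset.nonempty_iff_ne_empty.mpr hemp)
        omega
    -- sum the key inequality over i
    have hsum : ∑ _i : Fin m, 2 ≤ ∑ i : Fin m, (2 * (f (i, j)).card + (f (i - 1, j)).card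
        + (f (i + 1, j)).card + (f (i, j - 1)).card + (f (i, j + 1)).card) :=
      Finset.sum_le_sum fun i _ => key i
    have hL : ∑ _i : Fin m, 2 = 2 * m := by
      rw [Finset.sum_const, card_univ, Fintype.card_fin, smul_eq_mul, Nat.mul_comm]
    have hA : ∑ i : Fin m, (f (i - 1, j)).card = s j := by
      rw [hs]
      exact Fintype.sum_equiv (Equiv.subRight (1 : Fin m)) _ _ (fun i => rfl)
    have hB : ∑ i : Fin m, (f (i + 1, j)).card = s j := by
      rw [hs]
      exact Fintype.sum_equiv (Equiv.addRight (1 : Fin m)) _ _ (fun i => rfl)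
    have hR : ∑ i : Fin m, (2 * (f (i, j)).card + (f (i - 1, j)).card
        + (f (i + 1, j)).card + (f (i, j - 1)).card + (f (i, j + 1)).card)
        = 2 * s j + s j + s j + s (j - 1) + s (j + 1) := by
      rw [Finset.sum_add_distrib, Finset.sum_add_distrib, Finset.sum_add_distrib,
        Finset.sum_add_distrib, ← Finset.mul_sum, ← hs, hA, hB, ← hs, ← hs]
    rw [hL, hR] at hsum
    have := hsum
    push_cast
    omega
  · rw [hkl]; push_cast; ring
end

section
/- Let m ≥ 3 with m ≡ 0 (mod 3), and let n ≥ 6 with n ≡ b (mod 6) for b ∈ {1,2,3,5}. Then γ_{r2}(C_m □ C_n) ≤ (m/3)·(n+1). -/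
open SimpleGraph Finset

def pat (n i j : ℕ) : Finset (Fin 2) :=
  if j = 0 then
    if i % 3 = 0 then (if n % 3 = 0 then {0, 1} else {0})
    else if i % 3 = n % 3 then (if n % 2 = 0 then {0} else {1})
    else ∅
  else if i % 3 = j % 3 then (if j % 2 = 0 then {0} else {1}) else ∅

lemma pat0 (n i : ℕ) :
    pat n i 0 = if i % 3 = 0 then (if n % 3 = 0 then ({0, 1} : Finset (Fin 2)) else {0})
      else if i % 3 = n % 3 then (if n % 2 = 0 then {0} else {1}) else ∅ := by
  simp [pat]

lemma patj (n i j : ℕ) (hj : ¬ j = 0) :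
    pat n i j = if i % 3 = j % 3 then (if j % 2 = 0 then ({0} : Finset (Fin 2)) else {1})
      else ∅ := by
  simp [pat, hj]

lemma cyc_add (N : ℕ) [NeZero N] (hN : 2 ≤ N) (a : Fin N) :
    (cycleGraph N).Adj a (a + 1) ∧ (a + 1).val = (a.val + 1) % N := by
  obtain ⟨K, rfl⟩ : ∃ K, N = K + 2 := ⟨N - 2, by omega⟩
  exact ⟨by rw [cycleGraph_adj]; right; exact add_sub_cancel_left a 1,
    by rw [Fin.val_add, Fin.val_one]⟩

lemma cyc_sub (N : ℕ) [NeZero N] (hN : 2 ≤ N) (a : Fin N) :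
    (cycleGraph N).Adj a (a - 1) ∧ (a - 1).val = (a.val + (N - 1)) % N := by
  obtain ⟨K, rfl⟩ : ∃ K, N = K + 2 := ⟨N - 2, by omega⟩
  refine ⟨by rw [cycleGraph_adj]; left; exact sub_sub_cancel a 1, ?_⟩
  rw [Fin.sub_def]
  simp only [Fin.val_one]
  congr 1
  omega

lemma mem01 (c : Fin 2) : c ∈ ({0, 1} : Finset (Fin 2)) := by fin_cases c <;> simp

lemma mem0 (c : Fin 2) (h : c.val = 0) : c ∈ ({0} : Finset (Fin 2)) := by
  simp [Fin.ext_iff, h]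

lemma mem1 (c : Fin 2) (h : c.val = 1) : c ∈ ({1} : Finset (Fin 2)) := by
  simp [Fin.ext_iff, h]

lemma mem_single (c : Fin 2) (k : ℕ) (h : c.val = k % 2) :
    c ∈ (if k % 2 = 0 then ({0} : Finset (Fin 2)) else {1}) := by
  split_ifs with h0
  · exact mem0 c (by omega)
  · exact mem1 c (by omega)

lemma pat_dom (m n : ℕ) (hm : 3 ≤ m) (hm3 : m % 3 = 0) (hn : 6 ≤ n)
    (hb : n % 6 = 1 ∨ n % 6 = 2 ∨ n % 6 = 3 ∨ n % 6 = 5) :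
    IsRainbowDominating (cycleGraph m □ cycleGraph n) 2
      (fun v => pat n v.1.val v.2.val) := by
  have h3m : 3 ∣ m := Nat.dvd_of_mod_eq_zero hm3
  haveI : NeZero m := ⟨by omega⟩
  haveI : NeZero n := ⟨by omega⟩
  rintro ⟨i, j⟩ hemp c
  dsimp only at hemp ⊢
  have hiv := i.isLt
  have hjv := j.isLt
  have hcv := c.isLt
  obtain ⟨hadjip, hip⟩ := cyc_add m (by omega) i
  obtain ⟨hadjim, him⟩ := cyc_sub m (by omega) i
  obtain ⟨hadjjp, hjp⟩ := cyc_add n (by omega) j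
  obtain ⟨hadjjm, hjm⟩ := cyc_sub n (by omega) j
  have hip3 : (i + 1).val % 3 = (i.val + 1) % 3 := by
    rw [hip, Nat.mod_mod_of_dvd _ h3m]
  have him3 : (i - 1).val % 3 = (i.val + 2) % 3 := by
    rw [him, Nat.mod_mod_of_dvd _ h3m]; omega
  by_cases hj0 : j.val = 0
  · -- column 0
    rw [hj0, pat0] at hemp
    split_ifs at hemp with h1 h2 h3 h4
    · exact absurd hemp (by decide)
    · exact absurd hemp (by decide)
    · exact absurd hemp (by decide)
    · exact absurd hemp (by decide)
    -- h1 : ¬ i%3 = 0, h3 : ¬ i%3 = n%3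
    rcases hb with hb | hb | hb | hb
    · -- n % 6 = 1 : n%3 = 1, n%2 = 1, i%3 = 2
      have hi2 : i.val % 3 = 2 := by omega
      by_cases hc : c.val = 0
      · refine ⟨(i + 1, j), boxProd_adj.mpr (Or.inl ⟨hadjip, rfl⟩), ?_⟩
        rw [hj0, pat0]
        rw [if_pos (show (i+1).val % 3 = 0 by rw [hip3]; omega),
          if_neg (show ¬ n % 3 = 0 by omega)]
        exact mem0 c hc
      · refine ⟨(i - 1, j), boxProd_adj.mpr (Or.inl ⟨hadjim, rfl⟩), ?_⟩
        rw [hj0, pat0]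
        rw [if_neg (show ¬ (i-1).val % 3 = 0 by rw [him3]; omega),
          if_pos (show (i-1).val % 3 = n % 3 by rw [him3]; omega),
          if_neg (show ¬ n % 2 = 0 by omega)]
        exact mem1 c (by omega)
    · -- n % 6 = 2 : n%3 = 2, n%2 = 0, i%3 = 1
      have hi1 : i.val % 3 = 1 := by omega
      by_cases hc : c.val = 0
      · refine ⟨(i - 1, j), boxProd_adj.mpr (Or.inl ⟨hadjim, rfl⟩), ?_⟩
        rw [hj0, pat0]
        rw [if_pos (show (i-1).val % 3 = 0 by rw [him3]; omega),
          if_neg (show ¬ n % 3 = 0 by omega)]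
        exact mem0 c hc
      · refine ⟨(i, j + 1), boxProd_adj.mpr (Or.inr ⟨hadjjp, rfl⟩), ?_⟩
        have hv : (j + 1).val = 1 := by
          rw [hjp, hj0]; exact Nat.mod_eq_of_lt (by omega)
        rw [hv, patj n _ 1 one_ne_zero, if_pos (show i.val % 3 = 1 % 3 by omega),
          if_neg (by norm_num)]
        exact mem1 c (by omega)
    · -- n % 6 = 3 : n%3 = 0
      have hi : i.val % 3 = 1 ∨ i.val % 3 = 2 := by omega
      rcases hi with hi | hi
      · refine ⟨(i - 1, j), boxProd_adj.mpr (Or.inl ⟨hadjim, rfl⟩), ?_⟩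
        rw [hj0, pat0]
        rw [if_pos (show (i-1).val % 3 = 0 by rw [him3]; omega),
          if_pos (show n % 3 = 0 by omega)]
        exact mem01 c
      · refine ⟨(i + 1, j), boxProd_adj.mpr (Or.inl ⟨hadjip, rfl⟩), ?_⟩
        rw [hj0, pat0]
        rw [if_pos (show (i+1).val % 3 = 0 by rw [hip3]; omega),
          if_pos (show n % 3 = 0 by omega)]
        exact mem01 c
    · -- n % 6 = 5 : n%3 = 2, n%2 = 1, i%3 = 1
      have hi1 : i.val % 3 = 1 := by omega
      by_cases hc : c.val = 0
      · refine ⟨(i - 1, j), boxProd_adj.mpr (Or.inl ⟨hadjim, rfl⟩), ?_⟩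
        rw [hj0, pat0]
        rw [if_pos (show (i-1).val % 3 = 0 by rw [him3]; omega),
          if_neg (show ¬ n % 3 = 0 by omega)]
        exact mem0 c hc
      · refine ⟨(i + 1, j), boxProd_adj.mpr (Or.inl ⟨hadjip, rfl⟩), ?_⟩
        rw [hj0, pat0]
        rw [if_neg (show ¬ (i+1).val % 3 = 0 by rw [hip3]; omega),
          if_pos (show (i+1).val % 3 = n % 3 by rw [hip3]; omega),
          if_neg (show ¬ n % 2 = 0 by omega)]
        exact mem1 c (by omega)
  · -- j ≥ 1
    rw [patj n _ _ hj0] at hemp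
    split_ifs at hemp with h1 h2
    · exact absurd hemp (by decide)
    · exact absurd hemp (by decide)
    -- h1 : ¬ i%3 = j%3
    by_cases hc : c.val = j.val % 2
    · -- own column color
      have htri : i.val % 3 = (j.val + 1) % 3 ∨ i.val % 3 = (j.val + 2) % 3 := by omega
      rcases htri with h | h
      · refine ⟨(i - 1, j), boxProd_adj.mpr (Or.inl ⟨hadjim, rfl⟩), ?_⟩
        rw [patj n _ _ hj0, if_pos (show (i-1).val % 3 = j.val % 3 by rw [him3]; omega)]
        exact mem_single c j.val hc
      · refine ⟨(i + 1, j), boxProd_adj.mpr (Or.inl ⟨hadjip, rfl⟩), ?_⟩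
        rw [patj n _ _ hj0, if_pos (show (i+1).val % 3 = j.val % 3 by rw [hip3]; omega)]
        exact mem_single c j.val hc
    · -- other color, from neighbor column
      have hc' : c.val = (j.val + 1) % 2 := by omega
      have htri : i.val % 3 = (j.val + 1) % 3 ∨ i.val % 3 = (j.val + 2) % 3 := by omega
      rcases htri with h | h
      · -- column j+1
        refine ⟨(i, j + 1), boxProd_adj.mpr (Or.inr ⟨hadjjp, rfl⟩), ?_⟩
        by_cases hlast : j.val = n - 1
        · have hv : (j + 1).val = 0 := by
            rw [hjp, hlast, show n - 1 + 1 = n by omega, Nat.mod_self]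
          rw [hv, pat0]
          have hin : i.val % 3 = n % 3 := by omega
          by_cases hρ0 : n % 3 = 0
          · rw [if_pos (show i.val % 3 = 0 by omega), if_pos hρ0]
            exact mem01 c
          · rw [if_neg (show ¬ i.val % 3 = 0 by omega), if_pos hin]
            exact mem_single c n (by omega)
        · have hv : (j + 1).val = j.val + 1 := by
            rw [hjp]; exact Nat.mod_eq_of_lt (by omega)
          rw [hv, patj n _ _ (show ¬ j.val + 1 = 0 by omega),
            if_pos (show i.val % 3 = (j.val + 1) % 3 from h)]
          exact mem_single c (j.val + 1) hc'
      · -- column j-1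
        refine ⟨(i, j - 1), boxProd_adj.mpr (Or.inr ⟨hadjjm, rfl⟩), ?_⟩
        have hv : (j - 1).val = j.val - 1 := by
          rw [hjm, show j.val + (n - 1) = (j.val - 1) + n by omega, Nat.add_mod_right]
          exact Nat.mod_eq_of_lt (by omega)
        rw [hv]
        by_cases hj1 : j.val = 1
        · rw [show j.val - 1 = 0 by omega, pat0, if_pos (show i.val % 3 = 0 by omega)]
          by_cases hρ0 : n % 3 = 0
          · rw [if_pos hρ0]; exact mem01 c
          · rw [if_neg hρ0]; exact mem0 c (by omega)
        · rw [patj n _ _ (show ¬ j.val - 1 = 0 by omega),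
            if_pos (show i.val % 3 = (j.val - 1) % 3 by omega)]
          exact mem_single c (j.val - 1) (by omega)

lemma sum_mod3 (q r k : ℕ) (hr : r < 3) :
    ∑ x ∈ Finset.range (3 * q), (if x % 3 = r then k else 0) = q * k := by
  induction q with
  | zero => simp
  | succ q ih =>
    rw [show 3 * (q + 1) = 3 * q + 1 + 1 + 1 by ring, Finset.sum_range_succ,
      Finset.sum_range_succ, Finset.sum_range_succ, ih]
    have h0 : 3 * q % 3 = 0 := by omega
    have h1 : (3 * q + 1) % 3 = 1 := by omega
    have h2 : (3 * q + 1 + 1) % 3 = 2 := by omega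
    interval_cases r <;> simp [h0, h1, h2] <;> ring

lemma card_pat_col0_a (n iv : ℕ) (hρ : n % 3 = 0) :
    (pat n iv 0).card = if iv % 3 = 0 then 2 else 0 := by
  simp only [pat, if_pos rfl, hρ]
  split_ifs with h1 h2 <;> first | rfl | omega | decide

lemma card_pat_col0_b (n iv : ℕ) (hρ : ¬ n % 3 = 0) :
    (pat n iv 0).card = (if iv % 3 = 0 then 1 else 0) + (if iv % 3 = n % 3 then 1 else 0) := by
  simp only [pat, if_pos rfl, if_neg hρ]
  split_ifs with h1 h2 h3 h4 <;> simp_all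

lemma card_pat_col (n iv jv : ℕ) (hj0 : ¬ jv = 0) :
    (pat n iv jv).card = if iv % 3 = jv % 3 then 1 else 0 := by
  simp only [pat, if_neg hj0]
  split_ifs <;> simp

lemma sum_col (m n jv : ℕ) (hm3 : m % 3 = 0) :
    ∑ iv ∈ Finset.range m, (pat n iv jv).card = (m / 3) * (if jv = 0 then 2 else 1) := by
  obtain ⟨q, rfl⟩ : ∃ q, m = 3 * q := ⟨m / 3, by omega⟩
  rw [show 3 * q / 3 = q by omega]
  by_cases hj0 : jv = 0
  · subst hj0
    rw [if_pos rfl]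
    by_cases hρ : n % 3 = 0
    · rw [Finset.sum_congr rfl (fun iv _ => card_pat_col0_a n iv hρ),
        sum_mod3 q 0 2 (by norm_num)]
    · rw [Finset.sum_congr rfl (fun iv _ => card_pat_col0_b n iv hρ),
        Finset.sum_add_distrib, sum_mod3 q 0 1 (by norm_num),
        sum_mod3 q (n % 3) 1 (by omega)]
      ring
  · rw [if_neg hj0, Finset.sum_congr rfl (fun iv _ => card_pat_col n iv jv hj0),
      sum_mod3 q (jv % 3) 1 (by omega)]

lemma pat_weight (m n : ℕ) (hm3 : m % 3 = 0) (hn : 1 ≤ n) :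
    ∑ v : Fin m × Fin n, (pat n v.1.val v.2.val).card = (m / 3) * (n + 1) := by
  rw [Fintype.sum_prod_type, Finset.sum_comm]
  rw [Fin.sum_univ_eq_sum_range (fun jv => ∑ i : Fin m, (pat n i.val jv).card) n]
  have step : ∀ jv ∈ Finset.range n,
      (∑ i : Fin m, (pat n i.val jv).card) = (m / 3) * (if jv = 0 then 2 else 1) := by
    intro jv _
    rw [Fin.sum_univ_eq_sum_range (fun iv => (pat n iv jv).card) m]
    exact sum_col m n jv hm3
  rw [Finset.sum_congr rfl step]
  have expand : ∀ jv ∈ Finset.range n,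
      (m / 3) * (if jv = 0 then 2 else 1)
        = (m / 3) + (if jv = 0 then (m / 3) else 0) := by
    intro jv _
    split_ifs <;> ring
  rw [Finset.sum_congr rfl expand, Finset.sum_add_distrib, Finset.sum_const,
    Finset.sum_ite_eq' (Finset.range n) 0 (fun _ => m / 3),
    if_pos (Finset.mem_range.mpr (by omega)), Finset.card_range, smul_eq_mul]
  ring

theorem two_rainbow_dom_cycles_upper_b1235 (m n : ℕ) (hm : 3 ≤ m) (hm3 : m % 3 = 0)
    (hn : 6 ≤ n) (hb : n % 6 = 1 ∨ n % 6 = 2 ∨ n % 6 = 3 ∨ n % 6 = 5) :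
    rainbowDomNum (cycleGraph m □ cycleGraph n) 2 ≤ (m / 3) * (n + 1) := by
  apply Nat.sInf_le
  exact ⟨fun v => pat n v.1.val v.2.val, pat_dom m n hm hm3 hn hb,
    (pat_weight m n hm3 (by omega)).symm⟩
end

section
/- Let m ≥ 3 with m ≡ 0 (mod 3), and let n ≥ 6 with n ≡ 4 (mod 6). Then γ_{r2}(C_m □ C_n) ≤ (m/3)·(n+2). -/
open SimpleGraph Finset

/-- The explicit 2-rainbow dominating function on `C_m □ C_n`. -/
def rdF (m n : ℕ) : Fin m × Fin n → Finset (Fin 2) := fun p =>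
  if p.2.val = n - 1 then (if p.1.val % 3 = 1 then ({0} : Finset (Fin 2)) else {1})
  else if p.1.val % 3 = p.2.val % 3 then
    (if p.2.val % 2 = 0 then ({0} : Finset (Fin 2)) else {1})
  else ∅

lemma cyc_adj_add_one {k : ℕ} [NeZero k] (hk : 2 ≤ k) (x : Fin k) :
    (cycleGraph k).Adj x (x + 1) := by
  rw [cycleGraph_adj']
  right
  have h1 : ((1 : Fin k) : ℕ) = 1 := by
    rw [Fin.val_one']; exact Nat.mod_eq_of_lt (by omega)
  rw [add_sub_cancel_left x 1, h1]

lemma cyc_adj_sub_one {k : ℕ} [NeZero k] (hk : 2 ≤ k) (x : Fin k) :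
    (cycleGraph k).Adj x (x - 1) := by
  rw [cycleGraph_adj']
  left
  have h1 : ((1 : Fin k) : ℕ) = 1 := by
    rw [Fin.val_one']; exact Nat.mod_eq_of_lt (by omega)
  rw [sub_sub_cancel x 1, h1]

lemma fin_add_one_val {k : ℕ} [NeZero k] (hk : 2 ≤ k) (x : Fin k) :
    (x + 1).val = (x.val + 1) % k := by
  have h1 : ((1 : Fin k) : ℕ) = 1 := by
    rw [Fin.val_one']; exact Nat.mod_eq_of_lt (by omega)
  rw [Fin.add_def, h1]

lemma fin_sub_one_val {k : ℕ} [NeZero k] (hk : 2 ≤ k) (x : Fin k) :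
    (x - 1).val = (x.val + (k - 1)) % k := by
  have h1 : ((1 : Fin k) : ℕ) = 1 := by
    rw [Fin.val_one']; exact Nat.mod_eq_of_lt (by omega)
  rw [Fin.sub_def, h1]
  show (k - 1 + x.val) % k = _
  rw [Nat.add_comm]

lemma count_mod3 (r : ℕ) (hr : r < 3) :
    ∀ t, ((Finset.range (3 * t)).filter (fun x => r = x % 3)).card = t := by
  intro t
  induction t with
  | zero => simp
  | succ t ih =>
    have e : 3 * (t + 1) = (3 * t + 1 + 1) + 1 := by ring
    rw [e, Finset.range_add_one, Finset.range_add_one, Finset.range_add_one,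
        Finset.filter_insert, Finset.filter_insert, Finset.filter_insert]
    have h0 : (3 * t) % 3 = 0 := by omega
    have h1 : (3 * t + 1) % 3 = 1 := by omega
    have h2 : (3 * t + 1 + 1) % 3 = 2 := by omega
    have nm : ∀ a : ℕ, 3 * t ≤ a →
        a ∉ (Finset.range (3 * t)).filter (fun x => r = x % 3) := by
      intro a ha hmem
      simp only [Finset.mem_filter, Finset.mem_range] at hmem
      omega
    interval_cases r
    · rw [if_neg (by omega), if_neg (by omega), if_pos (by omega),
        Finset.card_insert_of_notMem (nm _ le_rfl), ih]
    · rw [if_neg (by omega), if_pos (by omega), if_neg (by omega),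
        Finset.card_insert_of_notMem (nm _ (by omega)), ih]
    · rw [if_pos (by omega), if_neg (by omega), if_neg (by omega),
        Finset.card_insert_of_notMem (nm _ (by omega)), ih]

lemma rdF_sum (m n : ℕ) (hm : 3 ≤ m) (hm3 : m % 3 = 0) (hn : 6 ≤ n) (hb : n % 6 = 4) :
    ∑ p : Fin m × Fin n, (rdF m n p).card = (m / 3) * (n + 2) := by
  rw [Fintype.sum_prod_type]
  have inner : ∀ i : Fin m, ∑ j : Fin n, (rdF m n (i, j)).card = (n - 1) / 3 + 1 := by
    intro i
    have step : ∀ j : Fin n, (rdF m n (i, j)).card =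
        (fun x => if x = n - 1 then 1 else if i.val % 3 = x % 3 then 1 else 0) j.val := by
      intro j
      simp only [rdF]
      split_ifs <;> first | rfl | simp
    rw [Finset.sum_congr rfl (fun j _ => step j),
      Fin.sum_univ_eq_sum_range (fun x => if x = n - 1 then 1 else if i.val % 3 = x % 3 then 1 else 0) n]
    have hrange : Finset.range n = Finset.range ((n - 1) + 1) := by congr 1; omega
    rw [hrange, Finset.sum_range_succ, if_pos rfl]
    have : ∀ x ∈ Finset.range (n - 1),
        (if x = n - 1 then 1 else if i.val % 3 = x % 3 then 1 else 0)
          = if i.val % 3 = x % 3 then 1 else 0 := by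
      intro x hx
      rw [if_neg]
      have := Finset.mem_range.1 hx
      omega
    rw [Finset.sum_congr rfl this, ← Finset.card_filter]
    have e3 : n - 1 = 3 * ((n - 1) / 3) := by omega
    rw [e3, count_mod3 (i.val % 3) (Nat.mod_lt _ (by omega)) ((n - 1) / 3)]
    omega
  rw [Finset.sum_congr rfl (fun i _ => inner i), Finset.sum_const, Finset.card_univ,
    Fintype.card_fin, smul_eq_mul]
  obtain ⟨a, ha⟩ : ∃ a, m = 3 * a := ⟨m / 3, by omega⟩
  obtain ⟨b, hb'⟩ : ∃ b, n = 3 * b + 1 := ⟨n / 3, by omega⟩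
  subst ha hb'
  have h1 : (3 * b + 1 - 1) / 3 = b := by omega
  have h2 : (3 * a) / 3 = a := by omega
  rw [h1, h2]
  ring

lemma rdF_dominating (m n : ℕ) (hm : 3 ≤ m) (hm3 : m % 3 = 0) (hn : 6 ≤ n) (hb : n % 6 = 4) :
    IsRainbowDominating (cycleGraph m □ cycleGraph n) 2 (rdF m n) := by
  rintro ⟨i, j⟩ hv c
  have hn2 : n % 2 = 0 := by omega
  have hn3 : n % 3 = 1 := by omega
  have h3m : (3 : ℕ) ∣ m := by omega
  haveI : NeZero m := ⟨by omega⟩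
  haveI : NeZero n := ⟨by omega⟩
  simp only [rdF] at hv
  split_ifs at hv with h1 h2 h3
  · simp at hv
  · simp at hv
  · simp at hv
  · simp at hv
  -- h1 : ¬ j.val = n - 1, h3 : ¬ i.val % 3 = j.val % 3
  have hjlt : j.val < n := j.isLt
  have hjle : j.val ≤ n - 2 := by omega
  have hiup : ((i + 1 : Fin m)).val % 3 = (i.val + 1) % 3 := by
    rw [fin_add_one_val (show 2 ≤ m by omega) i, Nat.mod_mod_of_dvd _ h3m]
  have hidown : ((i - 1 : Fin m)).val % 3 = (i.val + 2) % 3 := by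
    rw [fin_sub_one_val (show 2 ≤ m by omega) i, Nat.mod_mod_of_dvd _ h3m]
    omega
  have hjr : ((j + 1 : Fin n)).val = j.val + 1 := by
    rw [fin_add_one_val (show 2 ≤ n by omega) j]
    exact Nat.mod_eq_of_lt (by omega)
  -- vertical neighbor provides the column color
  have hV : ∃ u, (cycleGraph m □ cycleGraph n).Adj (i, j) u ∧
      (if j.val % 2 = 0 then (0 : Fin 2) else 1) ∈ rdF m n u := by
    rcases (by omega : (i.val + 1) % 3 = j.val % 3 ∨ (i.val + 2) % 3 = j.val % 3) with h | h
    · refine ⟨(i + 1, j), ?_, ?_⟩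
      · rw [boxProd_adj]; exact Or.inl ⟨cyc_adj_add_one (show 2 ≤ m by omega) i, rfl⟩
      · simp only [rdF]
        rw [if_neg h1, if_pos (by rw [hiup]; exact h)]
        split_ifs <;> simp
    · refine ⟨(i - 1, j), ?_, ?_⟩
      · rw [boxProd_adj]; exact Or.inl ⟨cyc_adj_sub_one (show 2 ≤ m by omega) i, rfl⟩
      · simp only [rdF]
        rw [if_neg h1, if_pos (by rw [hidown]; exact h)]
        split_ifs <;> simp
  -- horizontal neighbor provides the other color
  have hH : ∃ u, (cycleGraph m □ cycleGraph n).Adj (i, j) u ∧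
      (if j.val % 2 = 0 then (1 : Fin 2) else 0) ∈ rdF m n u := by
    rcases (by omega : (j.val + 1) % 3 = i.val % 3 ∨ (j.val + 2) % 3 = i.val % 3) with h | h
    · refine ⟨(i, j + 1), ?_, ?_⟩
      · rw [boxProd_adj]; exact Or.inr ⟨cyc_adj_add_one (show 2 ≤ n by omega) j, rfl⟩
      · simp only [rdF, hjr]
        by_cases hlast : j.val = n - 2
        · rw [if_pos (by omega), if_neg (by omega)]
          rw [if_pos (by omega)]
          simp
        · rw [if_neg (by omega), if_pos (by omega)]
          by_cases hp : j.val % 2 = 0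
          · rw [if_pos hp, if_neg (by omega)]; simp
          · rw [if_neg hp, if_pos (by omega)]; simp
    · by_cases hz : j.val = 0
      · have hjl : ((j - 1 : Fin n)).val = n - 1 := by
          rw [fin_sub_one_val (show 2 ≤ n by omega) j, hz, Nat.zero_add]
          exact Nat.mod_eq_of_lt (by omega)
        refine ⟨(i, j - 1), ?_, ?_⟩
        · rw [boxProd_adj]; exact Or.inr ⟨cyc_adj_sub_one (show 2 ≤ n by omega) j, rfl⟩
        · simp only [rdF]
          rw [hjl, if_pos rfl]
          rw [if_neg (show ¬(i.val % 3 = 1) by omega)]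
          rw [if_pos (show j.val % 2 = 0 by omega)]
          simp
      · have hjl : ((j - 1 : Fin n)).val = j.val - 1 := by
          rw [fin_sub_one_val (show 2 ≤ n by omega) j]
          have e : j.val + (n - 1) = n + (j.val - 1) := by omega
          rw [e, Nat.add_mod_left]
          exact Nat.mod_eq_of_lt (by omega)
        refine ⟨(i, j - 1), ?_, ?_⟩
        · rw [boxProd_adj]; exact Or.inr ⟨cyc_adj_sub_one (show 2 ≤ n by omega) j, rfl⟩
        · simp only [rdF]
          rw [hjl, if_neg (by omega), if_pos (by omega)]
          by_cases hp : j.val % 2 = 0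
          · rw [if_pos hp, if_neg (by omega)]; simp
          · rw [if_neg hp, if_pos (by omega)]; simp
  fin_cases c
  · by_cases hp : j.val % 2 = 0
    · simpa [hp] using hV
    · simpa [hp] using hH
  · by_cases hp : j.val % 2 = 0
    · simpa [hp] using hH
    · simpa [hp] using hV

theorem two_rainbow_dom_cycles_upper_b4 (m n : ℕ) (hm : 3 ≤ m) (hm3 : m % 3 = 0)
    (hn : 6 ≤ n) (hb : n % 6 = 4) :
    rainbowDomNum (cycleGraph m □ cycleGraph n) 2 ≤ (m / 3) * (n + 2) := by
  exact Nat.sInf_le ⟨rdF m n, rdF_dominating m n hm hm3 hn hb,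
    (rdF_sum m n hm hm3 hn hb).symm⟩
end
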